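/- arXiv:math/9304208 — 3 statements merged into one kernel-verified Lean document; each statement's English description precedes it below -/
import Mathlib

section
/- Let G be a Polish group acting continuously on a Polish space X, U ⊆ G open nonempty, and A ⊆ X Borel. Then the Vaught transform A^{ΔU} = {x ∈ X : {g ∈ U : g·x ∈ A} is nonmeager in U} is Borel, and for B open in X, B^{ΔU} is open. -/
open Set Topology Filter

section Aux

variable {α : Type*} [TopologicalSpace α]

lemma aux_not_isMeagre_of_isOpen [BaireSpace α] {W : Set α} (hW : IsOpen W)
    (hne : W.Nonempty) : ¬ IsMeagre W := by
  intro h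
  have hd : Dense Wᶜ := dense_of_mem_residual h
  obtain ⟨x, hx⟩ := hne
  obtain ⟨y, hy1, hy2⟩ := hd.inter_open_nonempty W hW ⟨x, hx⟩
  exact hy2 hy1

lemma aux_isMeagre_union {s t : Set α} (hs : IsMeagre s) (ht : IsMeagre t) :
    IsMeagre (s ∪ t) := by
  rw [IsMeagre, compl_union]
  exact inter_mem hs ht

lemma aux_nwd_image {U : Set α} (hU : IsOpen U) {t : Set ↑U}
    (ht : IsNowhereDense t) : IsNowhereDense (Subtype.val '' t) := by
  rw [IsNowhereDense] at ht ⊢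
  set V := interior (closure (Subtype.val '' t)) with hV
  have hVopen : IsOpen V := isOpen_interior
  have hVU : V ∩ U = ∅ := by
    by_contra h
    obtain ⟨g, hgV, hgU⟩ := Set.nonempty_iff_ne_empty.mpr h
    have hsub : (Subtype.val ⁻¹' V : Set ↑U) ⊆ closure t := by
      intro z hz
      rw [closure_subtype]
      exact interior_subset hz
    have hopen : IsOpen (Subtype.val ⁻¹' V : Set ↑U) :=
      hVopen.preimage continuous_subtype_val
    have : (⟨g, hgU⟩ : ↑U) ∈ interior (closure t) :=
      interior_maximal hsub hopen (show (⟨g, hgU⟩ : ↑U) ∈ Subtype.val ⁻¹' V from hgV)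
    rw [ht] at this
    exact this
  -- V ⊆ closure U and V ∩ U = ∅ force V = ∅
  ext g
  simp only [mem_empty_iff_false, iff_false]
  intro hgV
  have hgc : g ∈ closure U := by
    have : closure (Subtype.val '' t) ⊆ closure U := by
      apply closure_mono
      rintro _ ⟨z, _, rfl⟩
      exact z.2
    exact this (interior_subset hgV)
  obtain ⟨y, hy1, hy2⟩ := mem_closure_iff.mp hgc V hVopen hgV
  have : y ∈ V ∩ U := ⟨hy1, hy2⟩
  rw [hVU] at this
  exact this

lemma aux_isMeagre_subtype_iff {U : Set α} (hU : IsOpen U) (S : Set ↑U) :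
    IsMeagre S ↔ IsMeagre (Subtype.val '' S) := by
  constructor
  · intro h
    rw [isMeagre_iff_countable_union_isNowhereDense] at h ⊢
    obtain ⟨F, hnwd, hcnt, hsub⟩ := h
    refine ⟨(Subtype.val '' ·) '' F, ?_, hcnt.image _, ?_⟩
    · rintro _ ⟨t, htF, rfl⟩
      exact aux_nwd_image hU (hnwd t htF)
    · rintro _ ⟨z, hzS, rfl⟩
      obtain ⟨t, htF, hzt⟩ := hsub hzS
      exact ⟨Subtype.val '' t, ⟨t, htF, rfl⟩, ⟨z, hzt, rfl⟩⟩
  · intro h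
    have := h.preimage_of_isOpenMap continuous_subtype_val hU.isOpenMap_subtype_val
    exact this.mono (subset_preimage_image _ _)

end Aux

section Vaught

variable {G X : Type} [TopologicalSpace G] [PolishSpace G]
  [TopologicalSpace X] [MeasurableSpace X] [BorelSpace X]

/-- For open `B`, the Vaught transform (expressed with sets in `G`) is the union of
the preimages, hence open. -/
lemma vaught_open_eq (a : G → X → X)
    (h_cont : Continuous (fun p : G × X => a p.1 p.2))
    (V : Set G) (hV : IsOpen V) (B : Set X) (hB : IsOpen B) :
    {x : X | ¬ IsMeagre {g : G | g ∈ V ∧ a g x ∈ B}} = ⋃ g ∈ V, (a g) ⁻¹' B := by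
  have : BaireSpace G := by
    letI := TopologicalSpace.upgradeIsCompletelyMetrizable G
    infer_instance
  ext x
  simp only [mem_setOf_eq, mem_iUnion, mem_preimage]
  constructor
  · intro h
    by_contra hng
    push_neg at hng
    have : {g : G | g ∈ V ∧ a g x ∈ B} = ∅ := by
      ext g; simp only [mem_setOf_eq, mem_empty_iff_false, iff_false]
      rintro ⟨hg1, hg2⟩; exact hng g hg1 hg2
    rw [this] at h
    exact h IsMeagre.empty
  · rintro ⟨g, hgV, hgB⟩
    have hopen : IsOpen {g : G | g ∈ V ∧ a g x ∈ B} := by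
      have hc : Continuous (fun g : G => a g x) :=
        h_cont.comp (continuous_id.prodMk continuous_const)
      exact hV.inter (hB.preimage hc)
    exact aux_not_isMeagre_of_isOpen hopen ⟨g, hgV, hgB⟩ 

lemma vaught_borel (a : G → X → X)
    (h_cont : Continuous (fun p : G × X => a p.1 p.2))
    {A : Set X} (hA : MeasurableSet A) :
    ∀ V : Set G, IsOpen V → MeasurableSet {x : X | ¬ IsMeagre {g : G | g ∈ V ∧ a g x ∈ A}} := by
  have hBaire : BaireSpace G := by
    letI := TopologicalSpace.upgradeIsCompletelyMetrizable G
    infer_instance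
  borelize G
  have hcg : ∀ x : X, Continuous (fun g : G => a g x) := fun x =>
    h_cont.comp (continuous_id.prodMk continuous_const)
  revert A
  apply MeasurableSet.induction_on_open
    (C := fun A _ => ∀ V : Set G, IsOpen V →
      MeasurableSet {x : X | ¬ IsMeagre {g : G | g ∈ V ∧ a g x ∈ A}})
  case isOpen =>
    intro B hB
    intro V hV
    rw [vaught_open_eq a h_cont V hV B hB]
    exact (isOpen_biUnion fun g _ => hB.preimage (h_cont.comp
      (continuous_const.prodMk continuous_id))).measurableSet
  case compl =>
    intro A hA IH
    intro V hV
    have key : {x : X | ¬ IsMeagre {g : G | g ∈ V ∧ a g x ∈ Aᶜ}} =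
        ⋃ (W : TopologicalSpace.countableBasis G) (_ : (W : Set G) ⊆ V ∧ (W : Set G).Nonempty),
          {x : X | ¬ IsMeagre {g : G | g ∈ (W : Set G) ∧ a g x ∈ A}}ᶜ := by
      ext x
      simp only [mem_setOf_eq, mem_iUnion, mem_compl_iff, not_not]
      constructor
      · intro hx
        -- the set {g ∈ V | a g x ∈ Aᶜ} is Baire measurable and nonmeager
        set T := {g : G | g ∈ V ∧ a g x ∈ Aᶜ} with hT
        have hTmeas : MeasurableSet T := by
          have : T = V ∩ (fun g => a g x) ⁻¹' Aᶜ := rfl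
          rw [this]
          exact hV.measurableSet.inter (hA.compl.preimage (hcg x).measurable)
        obtain ⟨u, hu_open, hequ⟩ := hTmeas.baireMeasurableSet.residualEq_isOpen
        have hD : IsMeagre {g : G | ¬ (g ∈ T ↔ g ∈ u)} := by
          rw [IsMeagre]
          have hc : {g : G | ¬ (g ∈ T ↔ g ∈ u)}ᶜ = {g : G | g ∈ T ↔ g ∈ u} := by
            ext g; simp
          rw [hc]
          filter_upwards [hequ] with g hg
          exact iff_of_eq hg
        -- u ∩ V is nonempty
        have huV : (u ∩ V).Nonempty := by
          by_contra h
          rw [Set.not_nonempty_iff_eq_empty] at h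
          -- then u ⊆ diff set, meager, so T meager: contradiction
          apply hx
          apply hD.mono
          intro g hgT
          intro h2
          have hgu : g ∈ u := h2.mp hgT
          have : g ∈ u ∩ V := ⟨hgu, hgT.1⟩
          rw [h] at this; exact this
        obtain ⟨g₀, hg₀⟩ := huV
        obtain ⟨W, hWb, hg₀W, hWuv⟩ :=
          (TopologicalSpace.isBasis_countableBasis G).exists_subset_of_mem_open hg₀ (hu_open.inter hV)
        refine ⟨⟨W, hWb⟩, ⟨fun g hg => (hWuv hg).2, ⟨g₀, hg₀W⟩⟩, ?_⟩
        -- {g ∈ W | a g x ∈ A} ⊆ symmetric difference, meager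
        apply hD.mono
        rintro g ⟨hgW, hgA⟩
        intro h2
        have hgu : g ∈ u := (hWuv hgW).1
        exact (h2.mpr hgu).2 hgA
      · rintro ⟨W, ⟨hWV, hWne⟩, hWx⟩
        intro hmg
        have hWopen : IsOpen (W : Set G) := TopologicalSpace.isOpen_of_mem_countableBasis W.2
        apply aux_not_isMeagre_of_isOpen hWopen hWne
        apply (aux_isMeagre_union hWx hmg).mono
        intro g hgW
        by_cases h : a g x ∈ A
        · exact Or.inl ⟨hgW, h⟩
        · exact Or.inr ⟨hWV hgW, h⟩
    rw [key]
    refine MeasurableSet.iUnion fun W => MeasurableSet.iUnion fun _ => ?_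
    exact (IH (W : Set G) (TopologicalSpace.isOpen_of_mem_countableBasis W.2)).compl
  case iUnion =>
    intro f hdisj hmeas IH
    intro V hV
    have key : {x : X | ¬ IsMeagre {g : G | g ∈ V ∧ a g x ∈ ⋃ n, f n}} =
        ⋃ n, {x : X | ¬ IsMeagre {g : G | g ∈ V ∧ a g x ∈ f n}} := by
      ext x
      have hsets : {g : G | g ∈ V ∧ a g x ∈ ⋃ n, f n} =
          ⋃ n, {g : G | g ∈ V ∧ a g x ∈ f n} := by
        ext g; simp only [mem_setOf_eq, mem_iUnion]; tauto
      simp only [mem_setOf_eq]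
      rw [hsets, mem_iUnion]
      simp only [mem_setOf_eq]
      constructor
      · intro h
        by_contra hn
        push_neg at hn
        exact h (isMeagre_iUnion hn)
      · rintro ⟨n, hn⟩ hmg
        exact hn (hmg.mono (subset_iUnion (fun n => {g : G | g ∈ V ∧ a g x ∈ f n}) n))
    rw [key]
    exact MeasurableSet.iUnion fun n => IH n V hV

end Vaught

/-- Let `G` be a Polish group acting continuously on a Polish space `X`,
`U ⊆ G` open nonempty, and `A ⊆ X` Borel.  Then the Vaught transform
`A^{ΔU} = {x : {g ∈ U : g·x ∈ A} is nonmeager in U}` is Borel, and for open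
`B`, `B^{ΔU}` is open. -/
theorem stmt_4 {G X : Type} [Group G] [TopologicalSpace G] [IsTopologicalGroup G]
    [PolishSpace G] [TopologicalSpace X] [PolishSpace X]
    [MeasurableSpace X] [BorelSpace X]
    (a : G → X → X)
    (h_one : ∀ x, a 1 x = x)
    (h_mul : ∀ g h x, a (g * h) x = a g (a h x))
    (h_cont : Continuous (fun p : G × X => a p.1 p.2))
    (U : Set G) (hU : IsOpen U) (hUne : U.Nonempty)
    (A : Set X) (hA : MeasurableSet A) :
    MeasurableSet {x : X | ¬ IsMeagre {g : U | a (g : G) x ∈ A}} ∧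
      ∀ B : Set X, IsOpen B → IsOpen {x : X | ¬ IsMeagre {g : U | a (g : G) x ∈ B}} := by
  have hconv : ∀ (A' : Set X) (x : X),
      IsMeagre {g : U | a (g : G) x ∈ A'} ↔ IsMeagre {g : G | g ∈ U ∧ a g x ∈ A'} := by
    intro A' x
    rw [aux_isMeagre_subtype_iff hU]
    congr! 1
    ext g
    simp only [Set.mem_image, Set.mem_setOf_eq]
    constructor
    · rintro ⟨z, hz, rfl⟩; exact ⟨z.2, hz⟩
    · rintro ⟨hg, hga⟩; exact ⟨⟨g, hg⟩, hga, rfl⟩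
  constructor
  · have hset : {x : X | ¬ IsMeagre {g : U | a (g : G) x ∈ A}} =
        {x : X | ¬ IsMeagre {g : G | g ∈ U ∧ a g x ∈ A}} := by
      ext x; simp only [Set.mem_setOf_eq]; rw [hconv]
    rw [hset]
    exact vaught_borel a h_cont hA U hU
  · intro B hB
    have hset : {x : X | ¬ IsMeagre {g : U | a (g : G) x ∈ B}} =
        {x : X | ¬ IsMeagre {g : G | g ∈ U ∧ a g x ∈ B}} := by
      ext x; simp only [Set.mem_setOf_eq]; rw [hconv]
    rw [hset, vaught_open_eq a h_cont U hU B hB]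
    exact isOpen_biUnion fun g _ => hB.preimage (h_cont.comp
      (continuous_const.prodMk continuous_id))
end

section
/- Let G be a Polish group acting in a Borel way on a standard Borel space X, and let {S_n} be a sequence of Borel subsets of X separating points. Define f(x) = (D({g : g·x ∈ S_n})⁻¹)_n ∈ F(G)^ℕ, where D(A) = {g ∈ G : A is nonmeager in every neighborhood of g}. Then f is an injective equivariant Borel map into F(G)^ℕ with the coordinatewise left-translation action. -/
open TopologicalSpace

/-- The Effros Borel structure on the space of closed subsets of `G`. -/
def effrosBorel (G : Type) [TopologicalSpace G] : MeasurableSpace (Closeds G) :=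
  MeasurableSpace.generateFrom
    {S | ∃ V : Set G, IsOpen V ∧ S = {F : Closeds G | ((F : Set G) ∩ V).Nonempty}}

/-- Left translation on closed subsets of a topological group. -/
def leftTranslate {G : Type} [Group G] [TopologicalSpace G] [IsTopologicalGroup G]
    (g : G) (F : Closeds G) : Closeds G :=
  ⟨(fun h => g * h) '' (F : Set G),
    (Homeomorph.mulLeft g).isClosedMap _ F.isClosed'⟩

lemma isClosed_localProp {G : Type} [TopologicalSpace G] (P : Set G → Prop) :
    IsClosed {g : G | ∀ U : Set G, IsOpen U → g ∈ U → P U} := by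
  rw [← isOpen_compl_iff]
  have : {g : G | ∀ U : Set G, IsOpen U → g ∈ U → P U}ᶜ =
      ⋃₀ {U : Set G | IsOpen U ∧ ¬ P U} := by
    ext g
    simp only [Set.mem_compl_iff, Set.mem_setOf_eq, Set.mem_sUnion, not_forall]
    constructor
    · rintro ⟨U, hU, hg, hP⟩; exact ⟨U, ⟨hU, hP⟩, hg⟩
    · rintro ⟨U, ⟨hU, hP⟩, hg⟩; exact ⟨U, hU, hg, hP⟩
  rw [this]
  exact isOpen_sUnion fun U hU => hU.1

/-- `D(A)`: the closed set of points of `G` near which `A` is locally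
nonmeager, i.e. `A` is nonmeager in every open neighborhood of the point
(nonmeager computed in the subspace). -/
def Dset {G : Type} [TopologicalSpace G] (A : Set G) : Closeds G :=
  ⟨{g : G | ∀ U : Set G, IsOpen U → g ∈ U → ¬ IsMeagre {u : U | (u : G) ∈ A}},
    isClosed_localProp _⟩

/-- The inverse `F⁻¹ = {g⁻¹ : g ∈ F}` of a closed subset of a topological
group. -/
def invClosed {G : Type} [Group G] [TopologicalSpace G] [IsTopologicalGroup G]
    (F : Closeds G) : Closeds G :=
  ⟨(fun g : G => g⁻¹) ⁻¹' (F : Set G), F.isClosed'.preimage continuous_inv⟩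



open TopologicalSpace Topology Filter Set

section MeagreAux
variable {G : Type*} [TopologicalSpace G]

lemma isMeagre_union' {s t : Set G} (hs : IsMeagre s) (ht : IsMeagre t) : IsMeagre (s ∪ t) := by
  rw [IsMeagre, Set.compl_union]; exact Filter.inter_mem hs ht

lemma isMeagre_congr' {s t : Set G} (h : s =ᵇ t) : IsMeagre s ↔ IsMeagre t := by
  rw [eventuallyEq_set] at h
  constructor <;> intro hm
  · rw [IsMeagre] at hm ⊢
    filter_upwards [hm, h] with x hx hx'
    simp only [Set.mem_compl_iff] at hx ⊢
    exact fun h' => hx (hx'.mpr h')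
  · rw [IsMeagre] at hm ⊢
    filter_upwards [hm, h] with x hx hx'
    simp only [Set.mem_compl_iff] at hx ⊢
    exact fun h' => hx (hx'.mp h')

lemma not_isMeagre_of_isOpen_nonempty [BaireSpace G] {U : Set G} (hU : IsOpen U)
    (hne : U.Nonempty) : ¬ IsMeagre U := fun h => by
  obtain ⟨x, hxU, hxc⟩ := (dense_of_mem_residual h).inter_open_nonempty U hU hne
  exact hxc hxU

lemma isMeagre_open_iff' [BaireSpace G] {U : Set G} (hU : IsOpen U) :
    IsMeagre U ↔ U = ∅ := by
  constructor
  · intro h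
    by_contra hne
    exact not_isMeagre_of_isOpen_nonempty hU (Set.nonempty_iff_ne_empty.mpr hne) h
  · rintro rfl; exact IsMeagre.empty

/-- meagerness in an open subspace vs. ambient meagerness -/
lemma isMeagre_subtype_iff {U : Set G} (hU : IsOpen U) (A : Set G) :
    IsMeagre {u : U | (u : G) ∈ A} ↔ IsMeagre (A ∩ U) := by
  constructor
  · intro h
    rw [IsMeagre, mem_residual_iff] at h
    obtain ⟨S, hSo, hSd, hScnt, hSsub⟩ := h
    rw [IsMeagre, mem_residual_iff]
    refine ⟨(fun t => (Subtype.val '' t) ∪ (closure U)ᶜ) '' S, ?_, ?_, hScnt.image _, ?_⟩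
    · rintro _ ⟨t, ht, rfl⟩
      exact (hU.isOpenMap_subtype_val t (hSo t ht)).union isClosed_closure.isOpen_compl
    · rintro _ ⟨t, ht, rfl⟩
      have h1 : U ⊆ closure (Subtype.val '' t) := by
        intro x hx
        have : (⟨x, hx⟩ : U) ∈ closure t := (hSd t ht) _
        exact image_closure_subset_closure_image continuous_subtype_val
          (Set.mem_image_of_mem _ this)
      rw [dense_iff_closure_eq]
      apply Set.eq_univ_of_forall
      intro x
      by_cases hx : x ∈ closure U
      · have : closure U ⊆ closure (Subtype.val '' t ∪ (closure U)ᶜ) := by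
          calc closure U ⊆ closure (closure (Subtype.val '' t)) :=
                closure_mono h1 |>.trans (by rw [closure_closure])
            _ ⊆ closure (Subtype.val '' t ∪ (closure U)ᶜ) := by
                rw [closure_closure]; exact closure_mono Set.subset_union_left
        exact this hx
      · exact subset_closure (Or.inr hx)
    · rintro x hx ⟨hxA, hxU⟩
      have hxmem : ∀ t ∈ S, (⟨x, hxU⟩ : U) ∈ t := by
        intro t ht
        have := hx _ (Set.mem_image_of_mem _ ht)
        rcases this with h' | h'
        · obtain ⟨u, hu, hux⟩ := h'
          rwa [show u = (⟨x, hxU⟩ : U) from Subtype.ext hux] at hu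
        · exact absurd (subset_closure hxU) h'
      exact (hSsub hxmem) hxA
  · intro h
    have := h.preimage_of_isOpenMap continuous_subtype_val hU.isOpenMap_subtype_val
    exact this.mono (fun (u : U) (hu : (u : G) ∈ A) => (⟨hu, u.2⟩ : (u : G) ∈ A ∩ U))

end MeagreAux

section DsetAux
variable {G : Type} [TopologicalSpace G]

lemma mem_Dset_iff {A : Set G} {g : G} :
    g ∈ (Dset A : Set G) ↔ ∀ U : Set G, IsOpen U → g ∈ U → ¬ IsMeagre (A ∩ U) := by
  constructor
  · intro h U hUo hgU
    rw [← isMeagre_subtype_iff hUo]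
    exact h U hUo hgU
  · intro h U hUo hgU
    rw [isMeagre_subtype_iff hUo]
    exact h U hUo hgU

end DsetAux

section DsetAux2
variable {G : Type} [TopologicalSpace G]

lemma Dset_coe_of_eventuallyEq [BaireSpace G] {A U : Set G} (hU : IsOpen U) (h : A =ᵇ U) :
    (Dset A : Set G) = closure U := by
  have key : ∀ V : Set G, IsOpen V → (¬ IsMeagre (A ∩ V) ↔ (V ∩ U).Nonempty) := by
    intro V hV
    rw [isMeagre_congr' (h.inter (Filter.EventuallyEq.refl (residual G) V)),
      isMeagre_open_iff' (hU.inter hV), ← ne_eq, ← Set.nonempty_iff_ne_empty, Set.inter_comm]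
  ext g
  rw [mem_Dset_iff, mem_closure_iff]
  exact ⟨fun hg V hV hgV => (key V hV).mp (hg V hV hgV),
    fun hg V hV hgV => (key V hV).mpr (hg V hV hgV)⟩

lemma eventuallyEq_Dset [BaireSpace G] {A : Set G} (hA : BaireMeasurableSet A) :
    A =ᵇ (Dset A : Set G) := by
  obtain ⟨U, hUo, hAU⟩ := hA.residualEq_isOpen
  rw [Dset_coe_of_eventuallyEq hUo hAU]
  refine hAU.trans ?_
  have hm : IsMeagre (closure U \ U) := by
    have ho : IsOpen (U ∪ (closure U)ᶜ) := hUo.union isClosed_closure.isOpen_compl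
    have hd : Dense (U ∪ (closure U)ᶜ) := by
      rw [dense_iff_closure_eq]
      apply Set.eq_univ_of_forall
      intro x
      by_cases hx : x ∈ closure U
      · exact closure_mono Set.subset_union_left hx
      · exact subset_closure (Or.inr hx)
    refine Filter.mem_of_superset (residual_of_dense_open ho hd) ?_
    intro x hx
    simp only [Set.mem_compl_iff, Set.mem_diff, not_and, not_not]
    intro hxc
    rcases hx with hx | hx
    · exact hx
    · exact absurd hxc hx
  rw [eventuallyEq_set]
  filter_upwards [hm] with x hx
  simp only [Set.mem_compl_iff, Set.mem_diff, not_and, not_not] at hx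
  exact ⟨fun h' => subset_closure h', fun h' => hx h'⟩

lemma Dset_inter_nonempty_iff [BaireSpace G] {A W : Set G} (hA : BaireMeasurableSet A)
    (hW : IsOpen W) : ((Dset A : Set G) ∩ W).Nonempty ↔ ¬ IsMeagre (W ∩ A) := by
  obtain ⟨U, hUo, hAU⟩ := hA.residualEq_isOpen
  rw [Dset_coe_of_eventuallyEq hUo hAU]
  have h1 : (closure U ∩ W).Nonempty ↔ (U ∩ W).Nonempty := by
    constructor
    · rintro ⟨g, hgc, hgW⟩
      obtain ⟨y, hyW, hyU⟩ := mem_closure_iff.mp hgc W hW hgW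
      exact ⟨y, hyU, hyW⟩
    · rintro ⟨g, hgU, hgW⟩
      exact ⟨g, subset_closure hgU, hgW⟩
  rw [h1, isMeagre_congr' ((Filter.EventuallyEq.refl _ _).inter hAU),
    isMeagre_open_iff' (hW.inter hUo), ← ne_eq, ← Set.nonempty_iff_ne_empty, Set.inter_comm]

lemma isMeagre_preimage_homeomorph (e : G ≃ₜ G) {s : Set G} :
    IsMeagre (e ⁻¹' s) ↔ IsMeagre s := by
  rw [IsMeagre, IsMeagre, ← Set.preimage_compl, ← Filter.mem_map, Homeomorph.residual_map_eq]

lemma Dset_preimage (e : G ≃ₜ G) (A : Set G) :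
    (Dset (e ⁻¹' A) : Set G) = e ⁻¹' (Dset A : Set G) := by
  ext g
  rw [Set.mem_preimage, mem_Dset_iff, mem_Dset_iff]
  constructor
  · intro hg V hV hgV
    have h1 := hg (e ⁻¹' V) (hV.preimage e.continuous) (Set.mem_preimage.mpr hgV)
    rw [← Set.preimage_inter, isMeagre_preimage_homeomorph] at h1
    exact h1
  · intro hg V hV hgV
    have h1 := hg (e.symm ⁻¹' V) (hV.preimage e.symm.continuous)
      (by simp only [Set.mem_preimage, Homeomorph.symm_apply_apply]; exact hgV)
    have heq : e ⁻¹' A ∩ V = e ⁻¹' (A ∩ e.symm ⁻¹' V) := by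
      ext z
      simp only [Set.mem_inter_iff, Set.mem_preimage, Homeomorph.symm_apply_apply]
    rw [heq, isMeagre_preimage_homeomorph]
    exact h1

end DsetAux2

set_option linter.unusedSectionVars false

section MN
variable {G X : Type} [TopologicalSpace G] [BaireSpace G] [SecondCountableTopology G]
  [MeasurableSpace G] [BorelSpace G] [MeasurableSpace X]

/-- The class of sets in `G × X` for which the category quantifier argument works. -/
def GoodSet (A : Set (G × X)) : Prop :=
  (∀ x : X, BaireMeasurableSet {g : G | (g, x) ∈ A}) ∧
  ∀ W : Set G, IsOpen W → MeasurableSet {x : X | IsMeagre (W \ {g : G | (g, x) ∈ A})}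

lemma isMeagre_inter_iff {A : Set G} (hA : BaireMeasurableSet A) {W : Set G} (hW : IsOpen W) :
    IsMeagre (W ∩ A) ↔
      ∀ V ∈ countableBasis G, V ⊆ W → V.Nonempty → ¬ IsMeagre (V \ A) := by
  constructor
  · intro h V hVb hVW hVne hm
    have hsub : V ⊆ (V \ A) ∪ (W ∩ A) := by
      intro z hz
      by_cases hzA : z ∈ A
      · exact Or.inr ⟨hVW hz, hzA⟩
      · exact Or.inl ⟨hz, hzA⟩
    exact not_isMeagre_of_isOpen_nonempty (isOpen_of_mem_countableBasis hVb) hVne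
      ((isMeagre_union' hm h).mono hsub)
  · intro h
    by_contra hm
    obtain ⟨U, hUo, hAU⟩ := hA.residualEq_isOpen
    have h1 : ¬ IsMeagre (W ∩ U) := fun hh =>
      hm ((isMeagre_congr' ((Filter.EventuallyEq.refl _ _).inter hAU)).mpr hh)
    have hne : (W ∩ U).Nonempty := by
      by_contra hh
      exact h1 ((Set.not_nonempty_iff_eq_empty.mp hh) ▸ IsMeagre.empty)
    obtain ⟨x, hxWU⟩ := hne
    obtain ⟨V, hVb, hxV, hVsub⟩ :=
      (isBasis_countableBasis G).exists_subset_of_mem_open hxWU (hW.inter hUo)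
    refine h V hVb (hVsub.trans Set.inter_subset_left) ⟨x, hxV⟩ ?_
    have hev : (V \ A : Set G) =ᵇ (V \ U : Set G) :=
      (Filter.EventuallyEq.refl _ _).diff hAU
    have h0 : V \ U = ∅ := Set.diff_eq_empty.mpr (hVsub.trans Set.inter_subset_right)
    exact (isMeagre_congr' hev).mpr (h0 ▸ IsMeagre.empty)

lemma goodSet_meas_inter {A : Set (G × X)} (hA : GoodSet A) {W : Set G} (hW : IsOpen W) :
    MeasurableSet {x : X | IsMeagre (W ∩ {g : G | (g, x) ∈ A})} := by
  have heq : {x : X | IsMeagre (W ∩ {g : G | (g, x) ∈ A})} =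
      ⋂ V ∈ {V ∈ countableBasis G | V ⊆ W ∧ V.Nonempty},
        {x : X | IsMeagre (V \ {g : G | (g, x) ∈ A})}ᶜ := by
    ext x
    simp only [Set.mem_setOf_eq, Set.mem_iInter, Set.mem_compl_iff, Set.mem_sep_iff, and_imp]
    rw [isMeagre_inter_iff (hA.1 x) hW]
  rw [heq]
  exact MeasurableSet.biInter ((countable_countableBasis G).mono (Set.sep_subset _ _))
    (fun V hV => (hA.2 V (isOpen_of_mem_countableBasis hV.1)).compl)

lemma goodSet_compl {A : Set (G × X)} (hA : GoodSet A) : GoodSet Aᶜ := by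
  constructor
  · exact fun x => (hA.1 x).compl
  · intro W hW
    have heq : ∀ x : X, W \ {g : G | (g, x) ∈ Aᶜ} = W ∩ {g : G | (g, x) ∈ A} := by
      intro x
      ext z
      simp only [Set.mem_diff, Set.mem_setOf_eq, Set.mem_compl_iff, not_not, Set.mem_inter_iff]
    simp only [heq]
    exact goodSet_meas_inter hA hW

lemma goodSet_iUnion {A : ℕ → Set (G × X)} (hA : ∀ n, GoodSet (A n)) :
    GoodSet (⋃ n, A n) := by
  constructor
  · intro x
    have : {g : G | (g, x) ∈ ⋃ n, A n} = ⋃ n, {g : G | (g, x) ∈ A n} := by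
      ext z; simp
    rw [this]
    exact BaireMeasurableSet.iUnion (fun n => (hA n).1 x)
  · intro W hW
    -- use ⋃ A n = (⋂ (A n)ᶜ)ᶜ
    have hInter : GoodSet (⋂ n, (A n)ᶜ) := by
      constructor
      · intro x
        have : {g : G | (g, x) ∈ ⋂ n, (A n)ᶜ} = ⋂ n, {g : G | (g, x) ∈ A n}ᶜ := by
          ext z; simp
        rw [this]
        exact BaireMeasurableSet.iInter (fun n => ((hA n).1 x).compl)
      · intro W' hW'
        have heq : ∀ x : X, W' \ {g : G | (g, x) ∈ ⋂ n, (A n)ᶜ} =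
            ⋃ n, (W' \ {g : G | (g, x) ∈ (A n)ᶜ}) := by
          intro x
          ext z
          simp only [Set.mem_diff, Set.mem_setOf_eq, Set.mem_iInter, Set.mem_compl_iff,
            Set.mem_iUnion, not_forall, not_not]
          tauto
        have heq2 : {x : X | IsMeagre (W' \ {g : G | (g, x) ∈ ⋂ n, (A n)ᶜ})} =
            ⋂ n, {x : X | IsMeagre (W' \ {g : G | (g, x) ∈ (A n)ᶜ})} := by
          ext x
          rw [Set.mem_setOf_eq, heq x]
          simp only [Set.mem_iInter, Set.mem_setOf_eq]
          constructor
          · intro h n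
            exact h.mono (Set.subset_iUnion (fun n => W' \ {g : G | (g, x) ∈ (A n)ᶜ}) n)
          · exact isMeagre_iUnion
        rw [heq2]
        exact MeasurableSet.iInter (fun n => (goodSet_compl (hA n)).2 W' hW')
    have hfinal := goodSet_compl hInter
    have : (⋂ n, (A n)ᶜ)ᶜ = ⋃ n, A n := by simp [Set.compl_iInter]
    rw [this] at hfinal
    exact hfinal.2 W hW

lemma goodSet_prod {s : Set G} (hs : MeasurableSet s) {t : Set X} (ht : MeasurableSet t) :
    GoodSet (s ×ˢ t) := by
  constructor
  · intro x
    by_cases hx : x ∈ t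
    · have : {g : G | (g, x) ∈ s ×ˢ t} = s := by ext z; simp [hx]
      rw [this]
      exact hs.baireMeasurableSet
    · have : {g : G | (g, x) ∈ s ×ˢ t} = ∅ := by ext z; simp [hx]
      rw [this]
      exact IsMeagre.empty.baireMeasurableSet
  · intro W hW
    have heq : {x : X | IsMeagre (W \ {g : G | (g, x) ∈ s ×ˢ t})} =
        (t ∩ {x : X | IsMeagre (W \ s)}) ∪ (tᶜ ∩ {x : X | IsMeagre W}) := by
      ext x
      by_cases hx : x ∈ t
      · have h1 : {g : G | (g, x) ∈ s ×ˢ t} = s := by ext z; simp [hx]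
        simp [h1, hx]
      · have h1 : {g : G | (g, x) ∈ s ×ˢ t} = ∅ := by ext z; simp [hx]
        simp [h1, hx]
    rw [heq]
    exact (ht.inter (MeasurableSet.const _)).union (ht.compl.inter (MeasurableSet.const _))

lemma goodSet_of_measurable {A : Set (G × X)} (hA : MeasurableSet A) : GoodSet A := by
  let m : MeasurableSpace (G × X) :=
    { MeasurableSet' := GoodSet
      measurableSet_empty := by
        have : (∅ : Set (G × X)) = (∅ : Set G) ×ˢ (∅ : Set X) := by simp
        rw [this]
        exact goodSet_prod MeasurableSet.empty MeasurableSet.empty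
      measurableSet_compl := fun s hs => goodSet_compl hs
      measurableSet_iUnion := fun f hf => goodSet_iUnion hf }
  have hle : (Prod.instMeasurableSpace : MeasurableSpace (G × X)) ≤ m := by
    rw [← generateFrom_prod]
    apply MeasurableSpace.generateFrom_le
    rintro u hu
    rw [Set.mem_image2] at hu
    obtain ⟨s, hs, t, ht, rfl⟩ := hu
    exact goodSet_prod hs ht
  exact hle _ hA

end MN

/-- Let `G` be a Polish group acting in a Borel way on a standard Borel space
`X` and let `(S n)` be a sequence of Borel sets separating points.  Then
`f x = (D({g : g·x ∈ S n})⁻¹)ₙ` is an injective equivariant Borel map into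
`F(G)^ℕ` with the coordinatewise left translation action. -/
theorem stmt_13 {G X : Type} [Group G] [TopologicalSpace G] [IsTopologicalGroup G]
    [PolishSpace G] [MeasurableSpace G] [BorelSpace G]
    [MeasurableSpace X] [StandardBorelSpace X]
    (a : G → X → X)
    (h_one : ∀ x, a 1 x = x)
    (h_mul : ∀ g h x, a (g * h) x = a g (a h x))
    (h_meas : Measurable (fun p : G × X => a p.1 p.2))
    (S : ℕ → Set X) (hS : ∀ n, MeasurableSet (S n))
    (h_sep : ∀ x y : X, x ≠ y → ∃ n, (x ∈ S n ∧ y ∉ S n) ∨ (y ∈ S n ∧ x ∉ S n)) :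
    Function.Injective (fun (x : X) (n : ℕ) => invClosed (Dset {g : G | a g x ∈ S n})) ∧
    @Measurable X (ℕ → Closeds G) ‹MeasurableSpace X›
      (@MeasurableSpace.pi ℕ (fun _ => Closeds G) (fun _ => effrosBorel G))
      (fun (x : X) (n : ℕ) => invClosed (Dset {g : G | a g x ∈ S n})) ∧
    ∀ (g : G) (x : X) (n : ℕ),
      invClosed (Dset {h : G | a h (a g x) ∈ S n}) =
        leftTranslate g (invClosed (Dset {h : G | a h x ∈ S n})) := by
  haveI : BaireSpace G := by
    letI := upgradeIsCompletelyMetrizable G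
    infer_instance
  have hBM : ∀ (z : X) (n : ℕ), BaireMeasurableSet {g : G | a g z ∈ S n} := by
    intro z n
    have hm : Measurable fun g : G => a g z :=
      h_meas.comp (measurable_id.prodMk measurable_const)
    exact (hm (hS n)).baireMeasurableSet
  refine ⟨?_, ?_, ?_⟩
  · -- injectivity
    intro x y hxy
    by_contra hne
    have hinv : ∀ F : Closeds G, invClosed (invClosed F) = F := by
      intro F
      apply SetLike.coe_injective
      ext z
      simp [invClosed]
    have hD : ∀ n : ℕ, (Dset {g : G | a g x ∈ S n} : Set G) =
        (Dset {g : G | a g y ∈ S n} : Set G) := by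
      intro n
      have h1 : invClosed (Dset {g : G | a g x ∈ S n}) =
          invClosed (Dset {g : G | a g y ∈ S n}) := congrFun hxy n
      have h2 := congrArg invClosed h1
      rw [hinv, hinv] at h2
      exact congrArg _ h2
    have hEv : ∀ n : ℕ, {g : G | a g x ∈ S n} =ᵇ {g : G | a g y ∈ S n} := by
      intro n
      have h1 := eventuallyEq_Dset (hBM x n)
      have h2 := eventuallyEq_Dset (hBM y n)
      rw [hD n] at h1
      exact h1.trans h2.symm
    have hall : ∀ᵇ g : G, ∀ n, (a g x ∈ S n ↔ a g y ∈ S n) :=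
      eventually_countable_forall.mpr
        (fun n => Filter.eventuallyEq_set.mp (hEv n))
    have hGne : Nonempty G := ⟨1⟩
    obtain ⟨g, hg⟩ := (dense_of_mem_residual hall).nonempty
    have hax : a g x ≠ a g y := by
      intro h
      apply hne
      have := congrArg (a g⁻¹) h
      rwa [← h_mul, ← h_mul, inv_mul_cancel, h_one, h_one] at this
    obtain ⟨n, hn⟩ := h_sep _ _ hax
    rcases hn with ⟨h1, h2⟩ | ⟨h1, h2⟩
    · exact h2 ((hg n).mp h1)
    · exact h2 ((hg n).mpr h1)
  · -- measurability
    letI : MeasurableSpace (Closeds G) := effrosBorel G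
    apply measurable_pi_lambda
    intro n
    apply measurable_generateFrom
    rintro t ⟨V, hV, rfl⟩
    have hA : MeasurableSet {p : G × X | a p.1 p.2 ∈ S n} := h_meas (hS n)
    have hGood : GoodSet {p : G × X | a p.1 p.2 ∈ S n} := goodSet_of_measurable hA
    have hW : IsOpen ((fun g : G => g⁻¹) ⁻¹' V) := hV.preimage continuous_inv
    have hkey : ∀ z : X,
        ((invClosed (Dset {g : G | a g z ∈ S n}) : Set G) ∩ V).Nonempty ↔
        ¬ IsMeagre (((fun g : G => g⁻¹) ⁻¹' V) ∩ {g : G | a g z ∈ S n}) := by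
      intro z
      rw [← Dset_inter_nonempty_iff (hBM z n) hW]
      constructor
      · rintro ⟨k, hk1, hk2⟩
        exact ⟨k⁻¹, hk1, by simpa⟩
      · rintro ⟨m, hm1, hm2⟩
        refine ⟨m⁻¹, ?_, hm2⟩
        show m⁻¹⁻¹ ∈ (Dset {g : G | a g z ∈ S n} : Set G)
        rw [inv_inv]
        exact hm1
    have hpre : (fun x : X => invClosed (Dset {g : G | a g x ∈ S n})) ⁻¹'
          {F : Closeds G | ((F : Set G) ∩ V).Nonempty}
        = {x : X | IsMeagre (((fun g : G => g⁻¹) ⁻¹' V) ∩ {g : G | a g x ∈ S n})}ᶜ := by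
      ext z
      simp only [Set.mem_preimage, Set.mem_setOf_eq, Set.mem_compl_iff]
      exact hkey z
    rw [hpre]
    exact (goodSet_meas_inter hGood hW).compl
  · -- equivariance
    intro g x n
    apply SetLike.coe_injective
    have hset : {h : G | a h (a g x) ∈ S n} =
        (Homeomorph.mulRight g) ⁻¹' {h : G | a h x ∈ S n} := by
      ext h
      simp only [Set.mem_setOf_eq, Set.mem_preimage, Homeomorph.coe_mulRight]
      rw [h_mul]
    show (fun k : G => k⁻¹) ⁻¹' (Dset {h : G | a h (a g x) ∈ S n} : Set G) =
      (fun h => g * h) '' ((fun k : G => k⁻¹) ⁻¹' (Dset {h : G | a h x ∈ S n} : Set G))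
    rw [hset, Dset_preimage]
    ext k
    simp only [Set.mem_preimage, Set.mem_image, Homeomorph.coe_mulRight]
    constructor
    · intro hk
      refine ⟨g⁻¹ * k, ?_, by group⟩
      simpa [mul_inv_rev] using hk
    · rintro ⟨m, hm, rfl⟩
      simpa [mul_inv_rev, mul_assoc] using hm
end

section
/- Let X_∞ = 2^(ℕ^{<ℕ}) with the S_∞-action (g·x)(s_0,…,s_{n-1}) = x(g⁻¹(s_0),…,g⁻¹(s_{n-1})). This action of S_∞ on the compact space X_∞ is continuous, and X_∞ is a universal Borel S_∞-space. -/
/-- The Polish group `S_∞` is the group of permutations of `ℕ` with the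
topology inherited from Baire space `ℕ^ℕ`. -/
def permTopology : TopologicalSpace (Equiv.Perm ℕ) :=
  TopologicalSpace.induced (fun g => (g : ℕ → ℕ)) Pi.topologicalSpace

/-- The shift action of `S_∞` on `X_∞ = 2^(ℕ^{<ℕ})`:
`(g·x)(s₀,…,s_{n-1}) = x(g⁻¹ s₀, …, g⁻¹ s_{n-1})`. -/
def infAction (g : Equiv.Perm ℕ) (x : List ℕ → Bool) : List ℕ → Bool :=
  fun s => x (s.map (g⁻¹ : Equiv.Perm ℕ))

namespace SInf

abbrev G := Equiv.Perm ℕ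

instance : TopologicalSpace G := permTopology

lemma continuous_coe : Continuous ((⇑) : G → ℕ → ℕ) := continuous_induced_dom

lemma continuous_eval (m : ℕ) : Continuous (fun g : G => g m) :=
  (continuous_apply m).comp continuous_coe

lemma isOpen_eval (m n : ℕ) : IsOpen {g : G | g m = n} :=
  (isOpen_discrete {n}).preimage (continuous_eval m)

lemma isClosed_eval (m n : ℕ) : IsClosed {g : G | g m = n} :=
  (isClosed_discrete {n}).preimage (continuous_eval m)

lemma continuous_inv : Continuous (fun g : G => g⁻¹) := by
  rw [show (instTopologicalSpaceG : TopologicalSpace G) = permTopology from rfl]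
  apply continuous_induced_rng.2
  apply continuous_pi
  intro n
  rw [continuous_discrete_rng]
  intro m
  show IsOpen ((fun g : G => (g⁻¹ : G) n) ⁻¹' {m})
  have : ((fun g : G => (g⁻¹ : G) n) ⁻¹' {m}) = {g : G | g m = n} := by
    ext g
    simp only [Set.mem_preimage, Set.mem_singleton_iff, Set.mem_setOf_eq]
    constructor
    · rintro rfl; exact g.apply_symm_apply n
    · rintro rfl; exact g.symm_apply_apply m
  rw [this]
  exact isOpen_eval m n

end SInf

namespace SInf

/-- Basic clopen cylinder sets of `S_∞`. -/
def V (t : List ℕ) : Set G := {g : G | ∀ i < t.length, g i = t.getD i 0}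

lemma isOpen_V (t : List ℕ) : IsOpen (V t) := by
  have : V t = ⋂ i ∈ Finset.range t.length, {g : G | g i = t.getD i 0} := by
    ext g; simp [V]
  rw [this]
  exact isOpen_biInter_finset fun i _ => isOpen_eval _ _

lemma isClosed_V (t : List ℕ) : IsClosed (V t) := by
  have : V t = ⋂ i ∈ Finset.range t.length, {g : G | g i = t.getD i 0} := by
    ext g; simp [V]
  rw [this]
  exact isClosed_biInter fun i _ => isClosed_eval _ _

lemma getD_map (f : ℕ → ℕ) (t : List ℕ) {i : ℕ} (hi : i < t.length) :
    (t.map f).getD i 0 = f (t.getD i 0) := by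
  rw [List.getD_eq_getElem _ _ (by simpa using hi), List.getD_eq_getElem _ _ hi,
    List.getElem_map]

lemma mul_mem_V (h g : G) (t : List ℕ) :
    h * g ∈ V t ↔ g ∈ V (t.map ⇑h⁻¹) := by
  constructor
  · intro H i hi
    rw [List.length_map] at hi
    rw [getD_map _ _ hi]
    have := H i hi
    simp only [Equiv.Perm.mul_apply] at this
    rw [← this]; exact (h.symm_apply_apply _).symm
  · intro H i hi
    have := H i (by simpa using hi)
    rw [getD_map _ _ hi] at this
    show h (g i) = _
    rw [this]; exact h.apply_symm_apply _

/-- The cylinders form a basis of the topology of `S_∞`. -/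
lemma exists_V_subset {O : Set G} (hO : IsOpen O) {g : G} (hg : g ∈ O) :
    ∃ t : List ℕ, g ∈ V t ∧ V t ⊆ O := by
  rw [show (instTopologicalSpaceG : TopologicalSpace G) = permTopology from rfl] at hO
  rcases isOpen_induced_iff.1 hO with ⟨O', hO', rfl⟩
  rcases isOpen_pi_iff.1 hO' (⇑g) hg with ⟨I, u, hu, hsub⟩
  set m := (I.sup id) + 1 with hm
  refine ⟨(List.range m).map ⇑g, ?_, ?_⟩
  · intro i hi
    rw [List.length_map, List.length_range] at hi
    rw [getD_map _ _ (by simpa using hi)]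
    congr 1
    rw [List.getD_eq_getElem _ _ (by simpa using hi), List.getElem_range]
  · intro h hh
    apply hsub
    intro i hiI
    have hilt : i < m := Nat.lt_succ_of_le (Finset.le_sup (f := id) hiI)
    have := hh i (by simpa using hilt)
    rw [getD_map _ _ (by simpa using hilt),
      List.getD_eq_getElem _ _ (by simpa using hilt), List.getElem_range] at this
    show h i ∈ u i
    rw [this]
    exact (hu i hiI).2

lemma V_nested {t u : List ℕ} {g : G} (hgt : g ∈ V t) (hgu : g ∈ V u)
    (h : t.length ≤ u.length) : V u ⊆ V t := by
  intro k hk i hi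
  rw [hk i (lt_of_lt_of_le hi h), ← hgu i (lt_of_lt_of_le hi h), hgt i hi]

end SInf

namespace SInf

open Topology

/-- The embedding `g ↦ (g, g⁻¹)` of `S_∞` into `ℕ^ℕ × ℕ^ℕ`. -/
def emb (g : G) : (ℕ → ℕ) × (ℕ → ℕ) := (⇑g, ⇑g⁻¹)

lemma isClosedEmbedding_emb : Topology.IsClosedEmbedding emb := by
  refine ⟨⟨⟨?_⟩, ?_⟩, ?_⟩
  · -- topology is induced
    refine le_antisymm ?_ ?_
    · -- tG ≤ induced emb
      rw [← continuous_iff_le_induced]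
      exact continuous_prodMk.2 ⟨continuous_coe,
        continuous_coe.comp continuous_inv⟩
    · -- induced emb ≤ tG
      have : TopologicalSpace.induced emb instTopologicalSpaceProd =
          TopologicalSpace.induced ((⇑) : G → ℕ → ℕ) Pi.topologicalSpace ⊓
          TopologicalSpace.induced (fun g : G => (⇑g⁻¹ : ℕ → ℕ)) Pi.topologicalSpace := by
        rw [instTopologicalSpaceProd, induced_inf, induced_compose, induced_compose]
        rfl
      rw [this]
      exact inf_le_left
  · -- injective
    intro g h hg
    exact Equiv.coe_fn_injective (congrArg Prod.fst hg)
  · -- closed range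
    have : Set.range emb = ⋂ n : ℕ,
        ({p : (ℕ → ℕ) × (ℕ → ℕ) | p.1 (p.2 n) = n} ∩ {p | p.2 (p.1 n) = n}) := by
      ext ⟨f, h⟩
      simp only [Set.mem_range, Set.mem_iInter, Set.mem_inter_iff, Set.mem_setOf_eq]
      constructor
      · rintro ⟨g, hg⟩ n
        obtain ⟨h1, h2⟩ := Prod.mk.injEq .. ▸ hg
        subst h1; subst h2 <;> try skip
        exact ⟨g.apply_symm_apply n, g.symm_apply_apply n⟩
      · intro H
        refine ⟨⟨f, h, fun x => ?_, fun x => ?_⟩, rfl⟩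
        · exact (H x).2
        · exact (H x).1
    rw [this]
    apply isClosed_iInter
    intro n
    apply IsClosed.inter
    · rw [← isOpen_compl_iff]
      have : {p : (ℕ → ℕ) × (ℕ → ℕ) | p.1 (p.2 n) = n}ᶜ =
          ⋃ m : ℕ, ({p | p.2 n = m} ∩ {p | p.1 m ≠ n}) := by
        ext ⟨f, h⟩
        simp only [Set.mem_compl_iff, Set.mem_setOf_eq, Set.mem_iUnion, Set.mem_inter_iff]
        constructor
        · intro hne; exact ⟨h n, rfl, hne⟩
        · rintro ⟨m, hm, hne⟩; rw [hm]; exact hne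
      rw [this]
      apply isOpen_iUnion; intro m
      apply IsOpen.inter
      · show IsOpen ((fun p : (ℕ → ℕ) × (ℕ → ℕ) => p.2 n) ⁻¹' {m})
        exact IsOpen.preimage ((continuous_apply n).comp continuous_snd) (isOpen_discrete _)
      · show IsOpen ((fun p : (ℕ → ℕ) × (ℕ → ℕ) => p.1 m) ⁻¹' {n}ᶜ)
        exact IsOpen.preimage ((continuous_apply m).comp continuous_fst) (isOpen_discrete _)
    · rw [← isOpen_compl_iff]
      have : {p : (ℕ → ℕ) × (ℕ → ℕ) | p.2 (p.1 n) = n}ᶜ =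
          ⋃ m : ℕ, ({p | p.1 n = m} ∩ {p | p.2 m ≠ n}) := by
        ext ⟨f, h⟩
        simp only [Set.mem_compl_iff, Set.mem_setOf_eq, Set.mem_iUnion, Set.mem_inter_iff]
        constructor
        · intro hne; exact ⟨f n, rfl, hne⟩
        · rintro ⟨m, hm, hne⟩; rw [hm]; exact hne
      rw [this]
      apply isOpen_iUnion; intro m
      apply IsOpen.inter
      · show IsOpen ((fun p : (ℕ → ℕ) × (ℕ → ℕ) => p.1 n) ⁻¹' {m})
        exact IsOpen.preimage ((continuous_apply n).comp continuous_fst) (isOpen_discrete _)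
      · show IsOpen ((fun p : (ℕ → ℕ) × (ℕ → ℕ) => p.2 m) ⁻¹' {n}ᶜ)
        exact IsOpen.preimage ((continuous_apply m).comp continuous_snd) (isOpen_discrete _)

instance : PolishSpace G := by
  haveI : PolishSpace ((ℕ → ℕ) × (ℕ → ℕ)) := inferInstance
  exact isClosedEmbedding_emb.polishSpace

instance : BaireSpace G := by
  letI := TopologicalSpace.upgradeIsCompletelyMetrizable G
  infer_instance

lemma not_isMeagre_of_isOpen {U : Set G} (hU : IsOpen U) (hne : U.Nonempty) :
    ¬ IsMeagre U := by
  intro hm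
  rcases hne with ⟨x, hx⟩
  have hd : Dense Uᶜ := dense_of_mem_residual hm
  rcases hd.inter_open_nonempty U hU ⟨x, hx⟩ with ⟨y, hy1, hy2⟩
  exact hy2 hy1

end SInf

namespace SInf

open Topology

instance : MeasurableSpace G := borel G
instance : BorelSpace G := ⟨rfl⟩

/-- Localization: a Baire-measurable set which is non-meager on a cylinder is
comeager on a sub-cylinder. -/
lemma localization {P : Set G} (hP : BaireMeasurableSet P) {t : List ℕ}
    (hnm : ¬ IsMeagre (V t ∩ P)) :
    ∃ u : List ℕ, V u ⊆ V t ∧ (V u).Nonempty ∧ IsMeagre (V u \ P) := by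
  rcases hP.residualEq_isOpen with ⟨U, hU, heq⟩
  have hD : IsMeagre {g : G | ¬ (g ∈ P ↔ g ∈ U)} := by
    rw [IsMeagre]
    apply Filter.mem_of_superset heq
    intro g hg
    simp only [Set.mem_compl_iff, Set.mem_setOf_eq, not_not]
    exact iff_of_eq hg
  have hne : (V t ∩ U).Nonempty := by
    rcases Set.eq_empty_or_nonempty (V t ∩ U) with h | h
    · exfalso; apply hnm
      apply hD.mono
      intro g ⟨hgt, hgP⟩
      simp only [Set.mem_setOf_eq]
      intro hiff
      exact Set.eq_empty_iff_forall_notMem.1 h g ⟨hgt, hiff.1 hgP⟩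
    · exact h
  rcases hne with ⟨g, hgt, hgU⟩
  rcases exists_V_subset ((isOpen_V t).inter hU) ⟨hgt, hgU⟩ with ⟨u, hgu, husub⟩
  refine ⟨u, fun k hk => (husub hk).1, ⟨g, hgu⟩, ?_⟩
  apply hD.mono
  intro k ⟨hku, hkP⟩
  simp only [Set.mem_setOf_eq]
  intro hiff
  exact hkP (hiff.2 (husub hku).2)

/-- Left multiplication is a homeomorphism of `S_∞`, so preserves meagerness. -/
lemma isMeagre_preimage_mulLeft (h : G) (S : Set G) :
    IsMeagre ((fun g : G => h * g) ⁻¹' S) ↔ IsMeagre S := by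
  have hc : ∀ k : G, Continuous (fun g : G => k * g) := by
    intro k
    rw [show (instTopologicalSpaceG : TopologicalSpace G) = permTopology from rfl]
    apply continuous_induced_rng.2
    apply continuous_pi
    intro n
    exact continuous_of_discreteTopology.comp (continuous_eval n)
  let φ : G ≃ₜ G :=
    { toEquiv := Equiv.mulLeft h
      continuous_toFun := hc h
      continuous_invFun := hc h⁻¹ }
  have hres := φ.residual_map_eq
  show IsMeagre (⇑φ ⁻¹' S) ↔ IsMeagre S
  rw [IsMeagre, IsMeagre, ← Set.preimage_compl, ← Filter.mem_map, hres]

lemma meagre_union {s t : Set G} (hs : IsMeagre s) (ht : IsMeagre t) :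
    IsMeagre (s ∪ t) := by
  rw [IsMeagre, Set.compl_union]
  exact Filter.inter_mem hs ht

lemma meagre_symmdiff {P U : Set G} (heq : P =ᵇ U) :
    IsMeagre {g : G | ¬ (g ∈ P ↔ g ∈ U)} := by
  rw [IsMeagre]
  apply Filter.mem_of_superset heq
  intro g hg
  simp only [Set.mem_compl_iff, Set.mem_setOf_eq, not_not]
  exact iff_of_eq hg

/-- Characterization of meagerness of `V t ∩ S` by cylinder bits, for `S` with the
Baire property. -/
lemma lem_compl {S : Set G} (hS : BaireMeasurableSet S) (t : List ℕ) :
    IsMeagre (V t ∩ S) ↔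
      ∀ u : List ℕ, V u ⊆ V t → (V u).Nonempty → ¬ IsMeagre (V u \ S) := by
  constructor
  · intro hm u hsub hne hmu
    apply not_isMeagre_of_isOpen (isOpen_V u) hne
    apply (meagre_union hm hmu).mono
    intro g hg
    by_cases hgS : g ∈ S
    · exact Or.inl ⟨hsub hg, hgS⟩
    · exact Or.inr ⟨hg, hgS⟩
  · intro H
    by_contra hnm
    rcases localization hS hnm with ⟨u, hsub, hne, hmu⟩
    exact H u hsub hne hmu

/-- Characterization of comeagerness of a countable union on a cylinder. -/
lemma lem_union {S : ℕ → Set G} (hS : ∀ n, BaireMeasurableSet (S n)) (t : List ℕ) :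
    IsMeagre (V t \ ⋃ n, S n) ↔
      ∀ u : List ℕ, V u ⊆ V t → (V u).Nonempty →
        ∃ n w, V w ⊆ V u ∧ (V w).Nonempty ∧ IsMeagre (V w \ S n) := by
  constructor
  · intro hm u hsub hne
    have h1 : IsMeagre (V u \ ⋃ n, S n) :=
      hm.mono fun g hg => (⟨hsub hg.1, hg.2⟩ : g ∈ V t \ ⋃ n, S n)
    have h2 : ¬ IsMeagre (⋃ n, V u ∩ S n) := by
      intro h
      apply not_isMeagre_of_isOpen (isOpen_V u) hne
      apply (meagre_union h1 h).mono
      intro g hg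
      by_cases hgS : g ∈ ⋃ n, S n
      · rcases Set.mem_iUnion.1 hgS with ⟨n, hn⟩
        exact Or.inr (Set.mem_iUnion.2 ⟨n, hg, hn⟩)
      · exact Or.inl ⟨hg, hgS⟩
    have h3 : ∃ n, ¬ IsMeagre (V u ∩ S n) := by
      by_contra hall
      push_neg at hall
      exact h2 (isMeagre_iUnion hall)
    rcases h3 with ⟨n, hn⟩
    rcases localization (hS n) hn with ⟨w, hwsub, hwne, hwm⟩
    exact ⟨n, w, hwsub, hwne, hwm⟩
  · intro H
    by_contra hnm
    have hBM : BaireMeasurableSet (V t \ ⋃ n, S n) :=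
      ((isClosed_V t).measurableSet.baireMeasurableSet).diff
        (BaireMeasurableSet.iUnion hS)
    rcases hBM.residualEq_isOpen with ⟨U, hUopen, heq⟩
    have hD := meagre_symmdiff heq
    set M := V t \ ⋃ n, S n with hM
    have hUVt : U ⊆ V t := by
      by_contra hUVt
      have hop : IsOpen (U \ V t) := hUopen.inter (isClosed_V t).isOpen_compl
      have hne' : (U \ V t).Nonempty := by
        rcases Set.not_subset.1 hUVt with ⟨g, hgU, hgVt⟩
        exact ⟨g, hgU, hgVt⟩
      apply not_isMeagre_of_isOpen hop hne'
      apply hD.mono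
      intro g ⟨hgU, hgVt⟩
      simp only [Set.mem_setOf_eq]
      intro hiff
      exact hgVt (hiff.2 hgU).1
    have hUne : U.Nonempty := by
      rcases Set.eq_empty_or_nonempty U with h | h
      · exfalso
        apply hnm
        apply hD.mono
        intro g hgM
        simp only [Set.mem_setOf_eq]
        intro hiff
        rw [h] at hiff
        exact hiff.1 hgM
      · exact h
    rcases hUne with ⟨g, hgU⟩
    rcases exists_V_subset hUopen hgU with ⟨u, hgu, husub⟩
    rcases H u (husub.trans hUVt) ⟨g, hgu⟩ with ⟨n, w, hwsub, hwne, hwm⟩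
    apply not_isMeagre_of_isOpen (isOpen_V w) hwne
    have : V w ⊆ {g : G | ¬ (g ∈ M ↔ g ∈ U)} ∪ (V w \ S n) := by
      intro k hk
      by_cases hkM : k ∈ M
      · exact Or.inr ⟨hk, fun hkS => hkM.2 (Set.mem_iUnion.2 ⟨n, hkS⟩)⟩
      · refine Or.inl ?_
        simp only [Set.mem_setOf_eq]
        intro hiff
        exact hkM (hiff.2 (husub (hwsub hk)))
    exact (meagre_union hD hwm).mono this

section Quantifier

variable {X : Type} [mX : MeasurableSpace X]

/-- The section of a subset of `S_∞ × X` at `x`. -/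
def sec (A : Set (G × X)) (x : X) : Set G := {g : G | (g, x) ∈ A}

lemma sec_measurable {A : Set (G × X)} (hA : MeasurableSet A) (x : X) :
    MeasurableSet (sec A x) :=
  hA.preimage (measurable_prodMk_right)

lemma const_measurableSet (p : Prop) : MeasurableSet {x : X | p} := by
  by_cases h : p <;> simp [h]

lemma imp_measurableSet (p q : Prop) {S : Set X} (hS : MeasurableSet S) :
    MeasurableSet {x : X | p → q → x ∈ S} := by
  by_cases hp : p <;> by_cases hq : q <;> simp [hp, hq, hS]

/-- The category quantifier theorem: for a measurable `A ⊆ S_∞ × X`,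
the set of `x` such that the section `A_x` is comeager in the cylinder `V t`
is measurable. -/
theorem measurable_category_quantifier {A : Set (G × X)} (hA : MeasurableSet A)
    (t : List ℕ) : MeasurableSet {x | IsMeagre (V t \ sec A x)} := by
  let P : Set (G × X) → Prop := fun A =>
    MeasurableSet A ∧ ∀ t : List ℕ, MeasurableSet {x | IsMeagre (V t \ sec A x)}
  let m' : MeasurableSpace (G × X) :=
    { MeasurableSet' := P
      measurableSet_empty := by
        refine ⟨MeasurableSet.empty, fun t => ?_⟩
        have : {x : X | IsMeagre (V t \ sec (∅ : Set (G × X)) x)}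
            = {x : X | IsMeagre (V t)} := by
          ext x; simp [sec]
        rw [this]; exact const_measurableSet _
      measurableSet_compl := by
        rintro A ⟨hA, hM⟩
        refine ⟨hA.compl, fun t => ?_⟩
        have h1 : {x : X | IsMeagre (V t \ sec Aᶜ x)}
            = {x : X | IsMeagre (V t ∩ sec A x)} := by
          ext x
          have : V t \ sec Aᶜ x = V t ∩ sec A x := by
            ext g; simp [sec]
          simp only [Set.mem_setOf_eq, this]
        rw [h1]
        have h2 : {x : X | IsMeagre (V t ∩ sec A x)}
            = ⋂ u : List ℕ, {x : X | V u ⊆ V t → (V u).Nonempty →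
                x ∈ {x : X | IsMeagre (V u \ sec A x)}ᶜ} := by
          ext x
          simp only [Set.mem_iInter, Set.mem_setOf_eq, Set.mem_compl_iff]
          exact lem_compl ((sec_measurable hA x).baireMeasurableSet) t
        rw [h2]
        exact MeasurableSet.iInter fun u =>
          imp_measurableSet _ _ ((hM u).compl)
      measurableSet_iUnion := by
        intro f hf
        refine ⟨MeasurableSet.iUnion fun n => (hf n).1, fun t => ?_⟩
        have hsec : ∀ x, sec (⋃ n, f n) x = ⋃ n, sec (f n) x := by
          intro x; ext g; simp [sec]
        have h2 : {x : X | IsMeagre (V t \ sec (⋃ n, f n) x)}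
            = ⋂ u : List ℕ, {x : X | V u ⊆ V t → (V u).Nonempty →
                x ∈ {x : X | ∃ n w, V w ⊆ V u ∧ (V w).Nonempty ∧
                  IsMeagre (V w \ sec (f n) x)}} := by
          ext x
          simp only [Set.mem_iInter, Set.mem_setOf_eq, hsec]
          exact lem_union (fun n => (sec_measurable (hf n).1 x).baireMeasurableSet) t
        rw [h2]
        refine MeasurableSet.iInter fun u => imp_measurableSet _ _ ?_
        have h3 : {x : X | ∃ n w, V w ⊆ V u ∧ (V w).Nonempty ∧
            IsMeagre (V w \ sec (f n) x)}
            = ⋃ n : ℕ, ⋃ w : List ℕ, {x : X | V w ⊆ V u ∧ (V w).Nonempty ∧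
                IsMeagre (V w \ sec (f n) x)} := by
          ext x; simp
        rw [h3]
        refine MeasurableSet.iUnion fun n => MeasurableSet.iUnion fun w => ?_
        by_cases h4 : V w ⊆ V u ∧ (V w).Nonempty
        · have : {x : X | V w ⊆ V u ∧ (V w).Nonempty ∧ IsMeagre (V w \ sec (f n) x)}
              = {x : X | IsMeagre (V w \ sec (f n) x)} := by
            ext x; simp [h4.1, h4.2]
          rw [this]; exact (hf n).2 w
        · have : {x : X | V w ⊆ V u ∧ (V w).Nonempty ∧ IsMeagre (V w \ sec (f n) x)}
              = ∅ := by
            ext x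
            simp only [Set.mem_setOf_eq, Set.mem_empty_iff_false, iff_false]
            intro hc
            exact h4 ⟨hc.1, hc.2.1⟩
          rw [this]; exact MeasurableSet.empty }
  have hle : (Prod.instMeasurableSpace : MeasurableSpace (G × X)) ≤ m' := by
    rw [show (Prod.instMeasurableSpace : MeasurableSpace (G × X)) =
      MeasurableSpace.comap Prod.fst inferInstance ⊔
      MeasurableSpace.comap Prod.snd mX from rfl]
    apply sup_le
    · rintro s ⟨u, hu, rfl⟩
      refine ⟨hu.preimage measurable_fst, fun t => ?_⟩
      have : ∀ x : X, sec (Prod.fst ⁻¹' u) x = u := fun x => rfl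
      simp only [this]
      exact const_measurableSet _
    · rintro s ⟨u, hu, rfl⟩
      refine ⟨hu.preimage measurable_snd, fun t => ?_⟩
      have h1 : {x : X | IsMeagre (V t \ sec (Prod.snd ⁻¹' u) x)}
          = u ∪ {x : X | IsMeagre (V t)} := by
        ext x
        by_cases hx : x ∈ u
        · have : sec (Prod.snd ⁻¹' u) x = Set.univ := by
            ext g; simp [sec, hx]
          simp [this, hx, IsMeagre.empty]
        · have : sec (Prod.snd ⁻¹' u) x = ∅ := by
            ext g; simp [sec, hx]
          simp [this, hx]
      rw [h1]
      exact hu.union (const_measurableSet _)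
  exact (hle A hA).2 t

end Quantifier

lemma isMeagre_iUnion' {ι : Type*} [Countable ι] {s : ι → Set G}
    (h : ∀ i, IsMeagre (s i)) : IsMeagre (⋃ i, s i) := by
  rw [IsMeagre, Set.compl_iUnion]
  exact (countable_iInter_mem).2 h

section Action

variable {X : Type} [mX : MeasurableSpace X]

/-- The Vaught transform set: `x` such that for comeager-many `g ∈ V t`,
`g⁻¹ · x ∈ B`. -/
def DD (a : G → X → X) (B : Set X) (t : List ℕ) : Set X :=
  {x | IsMeagre (V t \ {g : G | a g⁻¹ x ∈ B})}

lemma DD_measurable {a : G → X → X} (hmeas : Measurable (fun p : G × X => a p.1 p.2))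
    {B : Set X} (hB : MeasurableSet B) (t : List ℕ) : MeasurableSet (DD a B t) := by
  have hinv : Measurable (fun p : G × X => a p.1⁻¹ p.2) := by
    have h1 : Measurable (fun p : G × X => (p.1⁻¹, p.2)) :=
      (continuous_inv.measurable.comp measurable_fst).prodMk measurable_snd
    exact hmeas.comp h1
  have hA : MeasurableSet ((fun p : G × X => a p.1⁻¹ p.2) ⁻¹' B) := hinv hB
  exact measurable_category_quantifier hA t

lemma DD_equivariant {a : G → X → X} (hone : ∀ x, a 1 x = x)
    (hmul : ∀ g h x, a (g * h) x = a g (a h x)) (B : Set X) (h : G) (x : X)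
    (t : List ℕ) : a h x ∈ DD a B t ↔ x ∈ DD a B (t.map ⇑h⁻¹) := by
  have key : ∀ g : G, a (h * g)⁻¹ (a h x) = a g⁻¹ x := by
    intro g
    calc a (h * g)⁻¹ (a h x) = a (g⁻¹ * h⁻¹) (a h x) := by rw [mul_inv_rev]
      _ = a g⁻¹ (a h⁻¹ (a h x)) := hmul ..
      _ = a g⁻¹ (a (h⁻¹ * h) x) := by rw [hmul]
      _ = a g⁻¹ x := by rw [inv_mul_cancel, hone]
  show IsMeagre (V t \ {g : G | a g⁻¹ (a h x) ∈ B}) ↔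
    IsMeagre (V (t.map ⇑h⁻¹) \ {g : G | a g⁻¹ x ∈ B})
  rw [← isMeagre_preimage_mulLeft h (V t \ {g : G | a g⁻¹ (a h x) ∈ B})]
  have hpre : (fun g : G => h * g) ⁻¹' (V t \ {g : G | a g⁻¹ (a h x) ∈ B}) =
      V (t.map ⇑h⁻¹) \ {g : G | a g⁻¹ x ∈ B} := by
    ext g
    simp only [Set.mem_preimage, Set.mem_diff, Set.mem_setOf_eq]
    rw [mul_mem_V, key g]
  rw [hpre]

open Classical in
/-- The equivariant Borel injection of a Borel `S_∞`-space into `X_∞`. -/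
noncomputable def pimap (a : G → X → X) (B : ℕ → Set X) (x : X) : List ℕ → Bool :=
  fun s => decide (x ∈ DD a (B (Nat.unpair s.length).1)
    (s.take (Nat.unpair s.length).2))

open Classical in
lemma measurable_decide {D : Set X} (hD : MeasurableSet D) :
    Measurable (fun x => decide (x ∈ D)) := by
  apply measurable_to_countable
  intro y
  by_cases hy : y ∈ D
  · have : (fun x => decide (x ∈ D)) ⁻¹' {decide (y ∈ D)} = D := by
      ext x; simp [hy]
    rw [this]; exact hD
  · have : (fun x => decide (x ∈ D)) ⁻¹' {decide (y ∈ D)} = Dᶜ := by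
      ext x; simp [hy]
    rw [this]; exact hD.compl

lemma pimap_measurable {a : G → X → X}
    (hmeas : Measurable (fun p : G × X => a p.1 p.2)) {B : ℕ → Set X}
    (hB : ∀ n, MeasurableSet (B n)) :
    Measurable (pimap a B) := by
  apply measurable_pi_iff.2
  intro s
  exact measurable_decide (DD_measurable hmeas (hB _) _)

lemma pimap_equivariant {a : G → X → X} (hone : ∀ x, a 1 x = x)
    (hmul : ∀ g h x, a (g * h) x = a g (a h x)) (B : ℕ → Set X) (h : G) (x : X) :
    pimap a B (a h x) = infAction h (pimap a B x) := by
  funext s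
  show pimap a B (a h x) s = pimap a B x (s.map ⇑h⁻¹)
  unfold pimap
  rw [List.length_map]
  apply decide_eq_decide.2
  rw [← List.map_take]
  exact DD_equivariant hone hmul _ h x _

end Action

section Injective

variable {X : Type} [mX : MeasurableSpace X]

theorem pimap_injective {a : G → X → X} (hone : ∀ x, a 1 x = x)
    (hmul : ∀ g h x, a (g * h) x = a g (a h x))
    (hmeas : Measurable (fun p : G × X => a p.1 p.2))
    {B : ℕ → Set X} (hB : ∀ n, MeasurableSet (B n))
    (hcompl : ∀ n, ∃ m, B m = (B n)ᶜ)
    (hsep : ∀ x y : X, (∀ n, x ∈ B n ↔ y ∈ B n) → x = y) :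
    Function.Injective (pimap a B) := by
  intro x y hπ
  -- transfer of all Vaught bits
  have H : ∀ n t, (x ∈ DD a (B n) t ↔ y ∈ DD a (B n) t) := by
    intro n t
    have hlen : t.length ≤ Nat.pair n t.length := Nat.right_le_pair _ _
    set s : List ℕ := t ++ List.replicate (Nat.pair n t.length - t.length) 0 with hs
    have hslen : s.length = Nat.pair n t.length := by
      rw [hs, List.length_append, List.length_replicate]
      omega
    have h1 := congrFun hπ s
    unfold pimap at h1
    rw [hslen, Nat.unpair_pair] at h1
    have htake : s.take t.length = t := by
      rw [hs]
      exact List.take_left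
    simp only at h1
    rw [htake] at h1
    exact decide_eq_decide.1 h1
  -- the sections
  set P : ℕ → Set G := fun n => {g : G | a g⁻¹ x ∈ B n} with hP
  set Q : ℕ → Set G := fun n => {g : G | a g⁻¹ y ∈ B n} with hQ
  have hmeas_sec : ∀ (z : X) (n : ℕ), MeasurableSet {g : G | a g⁻¹ z ∈ B n} := by
    intro z n
    have h1 : Measurable (fun g : G => a g⁻¹ z) :=
      (hmeas.comp ((continuous_inv.measurable).prodMk measurable_const))
    exact h1 (hB n)
  -- comeager-decided open sets
  set R : ℕ → Set G := fun n => ⋃ t : List ℕ, ⋃ (_ : IsMeagre (V t \ P n)), V t with hR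
  set R' : ℕ → Set G := fun n => ⋃ t : List ℕ, ⋃ (_ : IsMeagre (V t \ Q n)), V t with hR'
  set mf : ℕ → ℕ := fun n => Classical.choose (hcompl n) with hmf
  have hmfB : ∀ n, B (mf n) = (B n)ᶜ := fun n => Classical.choose_spec (hcompl n)
  have hWm : ∀ n, IsMeagre (R n \ P n) := by
    intro n
    have : R n \ P n ⊆ ⋃ t : List ℕ, ⋃ (_ : IsMeagre (V t \ P n)), (V t \ P n) := by
      rintro g ⟨hg1, hg2⟩
      rcases Set.mem_iUnion.1 hg1 with ⟨t, ht⟩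
      rcases Set.mem_iUnion.1 ht with ⟨hm, hgt⟩
      exact Set.mem_iUnion.2 ⟨t, Set.mem_iUnion.2 ⟨hm, hgt, hg2⟩⟩
    apply IsMeagre.mono this _
    apply isMeagre_iUnion'
    intro t
    by_cases hm : IsMeagre (V t \ P n)
    · simpa [hm] using hm
    · simp [hm, IsMeagre.empty]
  have hWm' : ∀ n, IsMeagre (R' n \ Q n) := by
    intro n
    have : R' n \ Q n ⊆ ⋃ t : List ℕ, ⋃ (_ : IsMeagre (V t \ Q n)), (V t \ Q n) := by
      rintro g ⟨hg1, hg2⟩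
      rcases Set.mem_iUnion.1 hg1 with ⟨t, ht⟩
      rcases Set.mem_iUnion.1 ht with ⟨hm, hgt⟩
      exact Set.mem_iUnion.2 ⟨t, Set.mem_iUnion.2 ⟨hm, hgt, hg2⟩⟩
    apply IsMeagre.mono this _
    apply isMeagre_iUnion'
    intro t
    by_cases hm : IsMeagre (V t \ Q n)
    · simpa [hm] using hm
    · simp [hm, IsMeagre.empty]
  have hRopen : ∀ n, IsOpen (R n) :=
    fun n => isOpen_iUnion fun t => isOpen_iUnion fun _ => isOpen_V t
  have hRopen' : ∀ n, IsOpen (R' n) :=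
    fun n => isOpen_iUnion fun t => isOpen_iUnion fun _ => isOpen_V t
  have hmfP : ∀ n, P (mf n) = (P n)ᶜ := by
    intro n
    ext g
    simp only [hP, Set.mem_setOf_eq, Set.mem_compl_iff, hmfB n, Set.mem_compl_iff]
  have hdense : ∀ n, Dense (R n ∪ R (mf n)) := by
    intro n
    rw [dense_iff_inter_open]
    rintro U hUopen ⟨g, hg⟩
    rcases exists_V_subset hUopen hg with ⟨t, hgt, htsub⟩
    by_cases hc : IsMeagre (V t ∩ P n)
    · refine ⟨g, hg, Or.inr ?_⟩
      have : IsMeagre (V t \ P (mf n)) := by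
        rw [hmfP n, Set.diff_compl]
        exact hc
      exact Set.mem_iUnion.2 ⟨t, Set.mem_iUnion.2 ⟨this, hgt⟩⟩
    · rcases localization ((hmeas_sec x n).baireMeasurableSet) hc with
        ⟨u, husub, ⟨k, hk⟩, hum⟩
      refine ⟨k, htsub (husub hk), Or.inl ?_⟩
      exact Set.mem_iUnion.2 ⟨u, Set.mem_iUnion.2 ⟨hum, hk⟩⟩
  -- the generic element
  set E : Set G := ⋂ n : ℕ, ((R n ∪ R (mf n)) ∩ (R n \ P n)ᶜ ∩ (R' n \ Q n)ᶜ) with hE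
  have hEres : E ∈ residual G := by
    apply (countable_iInter_mem).2
    intro n
    refine Filter.inter_mem (Filter.inter_mem ?_ (hWm n)) (hWm' n)
    exact residual_of_dense_open ((hRopen n).union (hRopen (mf n))) (hdense n)
  have hEne : E.Nonempty := (dense_of_mem_residual hEres).nonempty
  rcases hEne with ⟨g, hgE⟩
  have hgE' : ∀ n, g ∈ (R n ∪ R (mf n)) ∧ g ∉ (R n \ P n) ∧ g ∉ (R' n \ Q n) := by
    intro n
    have := Set.mem_iInter.1 hgE n
    exact ⟨this.1.1, this.1.2, this.2⟩
  -- key transfer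
  have key : ∀ n, g ∈ R n → (a g⁻¹ x ∈ B n ∧ a g⁻¹ y ∈ B n) := by
    intro n hgR
    have hx : a g⁻¹ x ∈ B n := by
      have := (hgE' n).2.1
      by_contra hc
      exact this ⟨hgR, hc⟩
    refine ⟨hx, ?_⟩
    rcases Set.mem_iUnion.1 hgR with ⟨t, ht⟩
    rcases Set.mem_iUnion.1 ht with ⟨hm, hgt⟩
    have hxD : x ∈ DD a (B n) t := hm
    have hyD : y ∈ DD a (B n) t := (H n t).1 hxD
    have hgR' : g ∈ R' n := Set.mem_iUnion.2 ⟨t, Set.mem_iUnion.2 ⟨hyD, hgt⟩⟩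
    have := (hgE' n).2.2
    by_contra hc
    exact this ⟨hgR', hc⟩
  have final : ∀ n, (a g⁻¹ x ∈ B n ↔ a g⁻¹ y ∈ B n) := by
    intro n
    rcases (hgE' n).1 with h | h
    · have := key n h
      exact ⟨fun _ => this.2, fun _ => this.1⟩
    · have := key (mf n) h
      rw [hmfB n] at this
      exact ⟨fun hx => absurd hx this.1, fun hy => absurd hy this.2⟩
  have hxy : a g⁻¹ x = a g⁻¹ y := hsep _ _ final
  have hcancel : ∀ z : X, a g (a g⁻¹ z) = z := by
    intro z
    rw [← hmul, mul_inv_cancel, hone]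
  calc x = a g (a g⁻¹ x) := (hcancel x).symm
    _ = a g (a g⁻¹ y) := by rw [hxy]
    _ = y := hcancel y

end Injective

lemma continuous_infAction :
    Continuous (fun p : G × (List ℕ → Bool) => infAction p.1 p.2) := by
  apply continuous_pi
  intro s
  rw [continuous_iff_continuousAt]
  rintro ⟨g₀, x₀⟩
  set c : Bool := x₀ (s.map ⇑g₀⁻¹) with hc
  set N : Set (G × (List ℕ → Bool)) :=
    {p | ∀ b ∈ s, p.1 (g₀⁻¹ b) = b} ∩ {p | p.2 (s.map ⇑g₀⁻¹) = c} with hNdef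
  have hNopen : IsOpen N := by
    apply IsOpen.inter
    · have : {p : G × (List ℕ → Bool) | ∀ b ∈ s, p.1 (g₀⁻¹ b) = b} =
          ⋂ b ∈ {b : ℕ | b ∈ s}, (Prod.fst ⁻¹' {g : G | g (g₀⁻¹ b) = b}) := by
        ext p; simp
      rw [this]
      exact Set.Finite.isOpen_biInter (List.finite_toSet s)
        (fun b _ => (isOpen_eval _ _).preimage continuous_fst)
    · show IsOpen ((fun p : G × (List ℕ → Bool) => p.2 (s.map ⇑g₀⁻¹)) ⁻¹' {c})
      exact IsOpen.preimage ((continuous_apply _).comp continuous_snd)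
        (isOpen_discrete _)
  have hNmem : N ∈ nhds (g₀, x₀) := by
    apply hNopen.mem_nhds
    exact ⟨fun b _ => g₀.apply_symm_apply b, rfl⟩
  have heq : ∀ p ∈ N, infAction p.1 p.2 s = c := by
    rintro ⟨g, x⟩ ⟨h1, h2⟩
    show x (s.map ⇑g⁻¹) = c
    have hmap : s.map ⇑g⁻¹ = s.map ⇑g₀⁻¹ := by
      apply List.map_congr_left
      intro b hb
      show g.symm b = g₀⁻¹ b
      rw [Equiv.symm_apply_eq]
      exact (h1 b hb).symm
    rw [hmap]
    exact h2
  show Filter.Tendsto _ (nhds (g₀, x₀)) (nhds c)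
  refine Filter.Tendsto.congr' ?_ tendsto_const_nhds
  filter_upwards [hNmem] with p hp
  exact (heq p hp).symm

end SInf


/-- The action of `S_∞` on the compact space `X_∞ = 2^(ℕ^{<ℕ})` is a
continuous action, and `X_∞` is a universal Borel `S_∞`-space. -/
theorem stmt_15 :
    (∀ x, infAction 1 x = x) ∧
    (∀ g h : Equiv.Perm ℕ, ∀ x, infAction (g * h) x = infAction g (infAction h x)) ∧
    CompactSpace (List ℕ → Bool) ∧
    @Continuous (Equiv.Perm ℕ × (List ℕ → Bool)) (List ℕ → Bool)
      (@instTopologicalSpaceProd _ _ permTopology inferInstance) inferInstance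
      (fun p => infAction p.1 p.2) ∧
    (∀ (X : Type) (mX : MeasurableSpace X), @StandardBorelSpace X mX →
      ∀ a : Equiv.Perm ℕ → X → X,
      (∀ x, a 1 x = x) → (∀ g h x, a (g * h) x = a g (a h x)) →
      @Measurable (Equiv.Perm ℕ × X) X
        (@Prod.instMeasurableSpace _ _ (@borel _ permTopology) mX) mX
        (fun p => a p.1 p.2) →
      ∃ π : X → (List ℕ → Bool), Function.Injective π ∧
        @Measurable X (List ℕ → Bool) mX (borel (List ℕ → Bool)) π ∧
        ∀ g x, π (a g x) = infAction g (π x)) := by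
  refine ⟨?_, ?_, inferInstance, ?_, ?_⟩
  · intro x
    funext s
    simp [infAction]
  · intro g h x
    funext s
    simp [infAction, mul_inv_rev, List.map_map]
  · exact SInf.continuous_infAction
  · intro X mX hSB a hone hmul hmeas
    haveI := hSB
    obtain ⟨f, hf, hfinj⟩ :=
      MeasurableSpace.measurable_injection_nat_bool_of_countablySeparated X
    set C : ℕ → Set X := fun k => {x | f x k = true} with hC
    have hCmeas : ∀ k, MeasurableSet (C k) := by
      intro k
      have : Measurable (fun x => f x k) := (measurable_pi_apply k).comp hf
      exact this (MeasurableSet.singleton true)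
    set B : ℕ → Set X := fun n => if Odd n then (C (n / 2))ᶜ else C (n / 2) with hB
    have hBmeas : ∀ n, MeasurableSet (B n) := by
      intro n
      by_cases h : Odd n <;> simp only [hB, h, if_true, if_false] <;>
        first
          | exact (hCmeas _).compl
          | exact hCmeas _
    have hBcompl : ∀ n, ∃ m, B m = (B n)ᶜ := by
      intro n
      by_cases h : Odd n
      · refine ⟨n - 1, ?_⟩
        have h1 : ¬ Odd (n - 1) := by
          rw [Nat.odd_iff] at h ⊢; omega
        have h2 : (n - 1) / 2 = n / 2 := by
          rw [Nat.odd_iff] at h; omega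
        simp only [hB, h, h1, if_true, if_false, h2, compl_compl]
      · refine ⟨n + 1, ?_⟩
        have h1 : Odd (n + 1) := by
          rw [Nat.odd_iff] at h ⊢; omega
        have h2 : (n + 1) / 2 = n / 2 := by
          rw [Nat.odd_iff] at h; omega
        simp only [hB, h, h1, if_true, if_false, h2]
    have hBsep : ∀ x y : X, (∀ n, x ∈ B n ↔ y ∈ B n) → x = y := by
      intro x y hxy
      apply hfinj
      funext k
      have := hxy (2 * k)
      have hk1 : ¬ Odd (2 * k) := by rw [Nat.odd_iff]; omega
      have hk2 : 2 * k / 2 = k := by omega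
      simp only [hB, hk1, if_false, hk2, hC, Set.mem_setOf_eq] at this
      cases hx : f x k <;> cases hy : f y k <;> simp_all
    refine ⟨SInf.pimap a B, ?_, ?_, ?_⟩
    · exact SInf.pimap_injective hone hmul hmeas hBmeas hBcompl hBsep
    · have hbeq : borel (List ℕ → Bool) =
          (inferInstance : MeasurableSpace (List ℕ → Bool)) :=
        BorelSpace.measurable_eq.symm
      rw [hbeq]
      exact SInf.pimap_measurable hmeas hBmeas
    · intro g x
      exact SInf.pimap_equivariant hone hmul B g x
end
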